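/- Let φ : ℕ → (0,∞) be monotonically increasing with φ(n) → ∞ as n → ∞. Then the set E_max^φ = {x ∈ [0,1] : liminf_{n→∞} r_n(x)/φ(n) = 0 and limsup_{n→∞} r_n(x)/φ(n) = +∞} is either residual in [0,1] or empty. -/

import Mathlib

open Filter MeasureTheory Set

/-- The `k`-th binary digit (for `k ≥ 1`) of a real number `x`,
namely `x_k = ⌊x * 2^k⌋ mod 2`, so that `x = Σ_{k ≥ 1} x_k / 2^k` for `x ∈ [0,1)`. -/
noncomputable def dyadicDigit (x : ℝ) (k : ℕ) : ℕ :=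
  ⌊x * 2 ^ k⌋.toNat % 2

/-- The run-length function: `runLen x n` is the length of the longest run of `1`'s
among the first `n` dyadic digits `x_1, …, x_n` of `x`. -/
noncomputable def runLen (x : ℝ) (n : ℕ) : ℕ :=
  sSup {ℓ : ℕ | ∃ i, i + ℓ ≤ n ∧ ∀ j < ℓ, dyadicDigit x (i + j + 1) = 1}

lemma dyadicDigit_of_mem {x : ℝ} {c k : ℕ} (h1 : (c : ℝ) / 2 ^ k ≤ x)
    (h2 : x < (c + 1) / 2 ^ k) : dyadicDigit x k = c % 2 := by
  have h2k : (0 : ℝ) < 2 ^ k := by positivity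
  have hf : ⌊x * 2 ^ k⌋ = (c : ℤ) := by
    rw [Int.floor_eq_iff]
    refine ⟨by push_cast; rwa [← div_le_iff₀ h2k], ?_⟩
    push_cast
    rwa [← lt_div_iff₀ h2k]
  simp [dyadicDigit, hf]

lemma dyadicDigit_interval {x : ℝ} {j n k : ℕ} (hk : k ≤ n)
    (h1 : (j : ℝ) / 2 ^ n ≤ x) (h2 : x < (j + 1) / 2 ^ n) :
    dyadicDigit x k = (j / 2 ^ (n - k)) % 2 := by
  set c := j / 2 ^ (n - k) with hc
  have hq : (0:ℕ) < 2 ^ (n - k) := Nat.pow_pos (by norm_num)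
  have hpow : (2 : ℝ) ^ n = 2 ^ (n - k) * 2 ^ k := by
    rw [← pow_add]; congr 1; omega
  have hle : (c : ℝ) / 2 ^ k ≤ (j : ℝ) / 2 ^ n := by
    rw [hpow, div_le_div_iff₀ (by positivity) (by positivity)]
    have : c * 2 ^ (n - k) ≤ j := Nat.div_mul_le_self _ _
    calc (c:ℝ) * (2 ^ (n-k) * 2 ^ k) = (c * 2 ^ (n-k) : ℕ) * 2 ^ k := by push_cast; ring
    _ ≤ (j:ℝ) * 2 ^ k :=
        mul_le_mul_of_nonneg_right (by exact_mod_cast this) (by positivity)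
  have hlt : ((j : ℝ) + 1) / 2 ^ n ≤ (c + 1) / 2 ^ k := by
    rw [hpow, div_le_div_iff₀ (by positivity) (by positivity)]
    have hj : j + 1 ≤ (c + 1) * 2 ^ (n - k) := by
      have h1 : 2 ^ (n-k) * c + j % 2 ^ (n-k) = j := by
        rw [hc]; exact Nat.div_add_mod j _
      have h2 := Nat.mod_lt j hq
      have h3 : (c + 1) * 2 ^ (n-k) = 2 ^ (n-k) * c + 2 ^ (n-k) := by ring
      omega
    calc ((j:ℝ) + 1) * 2 ^ k = ((j + 1 : ℕ) : ℝ) * 2 ^ k := by push_cast; ring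
    _ ≤ ((c + 1) * 2 ^ (n-k) : ℕ) * 2 ^ k :=
        mul_le_mul_of_nonneg_right (by exact_mod_cast hj) (by positivity)
    _ = ((c:ℝ) + 1) * (2 ^ (n-k) * 2 ^ k) := by push_cast; ring
  exact dyadicDigit_of_mem (hle.trans h1) (lt_of_lt_of_le h2 hlt)

lemma runLen_bddAbove (x : ℝ) (n : ℕ) :
    BddAbove {ℓ : ℕ | ∃ i, i + ℓ ≤ n ∧ ∀ j < ℓ, dyadicDigit x (i + j + 1) = 1} :=
  ⟨n, fun ℓ ⟨i, hi, _⟩ => by omega⟩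

lemma runLen_zero_mem (x : ℝ) (n : ℕ) :
    0 ∈ {ℓ : ℕ | ∃ i, i + ℓ ≤ n ∧ ∀ j < ℓ, dyadicDigit x (i + j + 1) = 1} :=
  ⟨0, by omega, fun j hj => (Nat.not_lt_zero j hj).elim⟩

lemma runLen_le (x : ℝ) (n : ℕ) : runLen x n ≤ n :=
  csSup_le ⟨0, runLen_zero_mem x n⟩ fun ℓ ⟨i, hi, _⟩ => by omega

lemma le_runLen {x : ℝ} {n ℓ i : ℕ} (hin : i + ℓ ≤ n)
    (hd : ∀ j < ℓ, dyadicDigit x (i + j + 1) = 1) : ℓ ≤ runLen x n :=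
  le_csSup (runLen_bddAbove x n) ⟨i, hin, hd⟩

lemma runLen_congr {x y : ℝ} {n : ℕ} (h : ∀ k, 1 ≤ k → k ≤ n → dyadicDigit x k = dyadicDigit y k) :
    runLen x n = runLen y n := by
  unfold runLen
  congr 1
  ext ℓ
  constructor <;> rintro ⟨i, hi, hd⟩ <;> refine ⟨i, hi, fun j hj => ?_⟩
  · rw [← h (i + j + 1) (by omega) (by omega)]; exact hd j hj
  · rw [h (i + j + 1) (by omega) (by omega)]; exact hd j hj

lemma runLen_le_of_zero {x : ℝ} {m n : ℕ}
    (h0 : ∀ k, m < k → k ≤ n → dyadicDigit x k = 0) : runLen x n ≤ m := by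
  refine csSup_le ⟨0, runLen_zero_mem x n⟩ fun ℓ ⟨i, hi, hd⟩ => ?_
  rcases Nat.eq_zero_or_pos ℓ with h | h
  · omega
  · by_contra hlm
    have hpos : dyadicDigit x (i + (ℓ - 1) + 1) = 1 := hd (ℓ - 1) (by omega)
    have he : i + (ℓ - 1) + 1 = i + ℓ := by omega
    rw [he] at hpos
    have : dyadicDigit x (i + ℓ) = 0 := by
      refine h0 _ ?_ (by omega)
      omega
    omega

lemma runLen_zeros_pattern {j m n : ℕ} (hmn : m ≤ n) (hj : j < 2 ^ m) :
    runLen (((j * 2 ^ (n - m) : ℕ) : ℝ) / 2 ^ n) n ≤ m := by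
  set j' : ℕ := j * 2 ^ (n - m) with hj'
  have hj'n : j' < 2 ^ n := by
    calc j' < 2 ^ m * 2 ^ (n - m) := by
          have := Nat.pow_pos (n := n - m) (show 0 < 2 by norm_num)
          exact (Nat.mul_lt_mul_right this).mpr hj
    _ = 2 ^ n := by rw [← pow_add]; congr 1; omega
  have hx1 : ((j' : ℕ) : ℝ) / 2 ^ n ≤ ((j' : ℕ) : ℝ) / 2 ^ n := le_refl _
  have hx2 : ((j' : ℕ) : ℝ) / 2 ^ n < (j' + 1) / 2 ^ n := by
    have h2n : (0:ℝ) < 2 ^ n := by positivity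
    rw [div_lt_div_iff₀ h2n h2n]
    nlinarith
  refine runLen_le_of_zero fun k hmk hkn => ?_
  rw [dyadicDigit_interval hkn hx1 hx2]
  obtain ⟨s, hs⟩ : ∃ s, k - m = s + 1 := ⟨k - m - 1, by omega⟩
  have hdiv : j' / 2 ^ (n - k) = j * 2 ^ (k - m) := by
    have hpow : 2 ^ (n - m) = 2 ^ (k - m) * 2 ^ (n - k) := by rw [← pow_add]; congr 1; omega
    rw [hj', hpow, ← mul_assoc]
    exact Nat.mul_div_cancel _ (Nat.pow_pos (by norm_num))
  rw [hdiv, hs, pow_succ, ← mul_assoc]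
  exact Nat.mul_mod_left _ 2

lemma runLen_ones_pattern {j m n : ℕ} (hmn : m ≤ n) (hj : j < 2 ^ m) :
    n - m ≤ runLen (((j * 2 ^ (n - m) + (2 ^ (n - m) - 1) : ℕ) : ℝ) / 2 ^ n) n := by
  set t : ℕ := n - m with ht
  set j' : ℕ := j * 2 ^ t + (2 ^ t - 1) with hj'
  have h2t : (1:ℕ) ≤ 2 ^ t := Nat.one_le_two_pow
  have hj'n : j' < 2 ^ n := by
    have h1 : j * 2 ^ t + 2 ^ t ≤ 2 ^ m * 2 ^ t := by
      have : (j + 1) * 2 ^ t ≤ 2 ^ m * 2 ^ t :=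
        Nat.mul_le_mul_right _ hj
      calc j * 2 ^ t + 2 ^ t = (j + 1) * 2 ^ t := by ring
        _ ≤ 2 ^ m * 2 ^ t := this
    have h2 : 2 ^ m * 2 ^ t = 2 ^ n := by rw [← pow_add]; congr 1; omega
    omega
  have h2n : (0:ℝ) < 2 ^ n := by positivity
  have hx1 : ((j' : ℕ) : ℝ) / 2 ^ n ≤ ((j' : ℕ) : ℝ) / 2 ^ n := le_refl _
  have hx2 : ((j' : ℕ) : ℝ) / 2 ^ n < (j' + 1) / 2 ^ n := by
    rw [div_lt_div_iff₀ h2n h2n]; nlinarith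
  refine le_runLen (i := m) (by omega) fun jj hjj => ?_
  set k : ℕ := m + jj + 1 with hk
  have hkn : k ≤ n := by omega
  rw [dyadicDigit_interval hkn hx1 hx2]
  set s : ℕ := n - k with hs
  set B : ℕ := 2 ^ s with hB
  set u : ℕ := 2 ^ (t - s) with hu
  have hBpos : 0 < B := Nat.pow_pos (by norm_num)
  have hupos : 1 ≤ u := Nat.one_le_two_pow
  have hBu : B * u = 2 ^ t := by rw [hB, hu, ← pow_add]; congr 1; omega
  obtain ⟨u', hu'⟩ : ∃ u', u = 2 * u' := ⟨2 ^ (t - s - 1), by rw [hu]; rw [← pow_succ']; congr 1; omega⟩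
  set a : ℕ := u * (j + 1) - 1 with ha
  have ha1 : a + 1 = u * (j + 1) := by
    have : 1 ≤ u * (j + 1) := Nat.one_le_iff_ne_zero.mpr (by positivity)
    omega
  have key : j' + 1 = B * (a + 1) := by
    calc j' + 1 = j * 2 ^ t + 2 ^ t := by omega
      _ = 2 ^ t * (j + 1) := by ring
      _ = (B * u) * (j + 1) := by rw [hBu]
      _ = B * (u * (j + 1)) := by ring
      _ = B * (a + 1) := by rw [ha1]
  have heq : j' = B * a + (B - 1) := by
    have : B * (a + 1) = B * a + B := by ring
    omega
  have hdiv : j' / B = a := by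
    rw [heq, Nat.mul_add_div hBpos, Nat.div_eq_of_lt (by omega)]; omega
  have hodd : a % 2 = 1 := by
    have h2 : a + 1 = 2 * (u' * (j + 1)) := by rw [ha1, hu']; ring
    omega
  rw [← hB, ← hs] at *
  rw [hdiv, hodd]

lemma runLen_interval {x : ℝ} {j n : ℕ} (h1 : (j : ℝ) / 2 ^ n ≤ x)
    (h2 : x < (j + 1) / 2 ^ n) : runLen x n = runLen ((j : ℝ) / 2 ^ n) n := by
  have h2n : (0:ℝ) < 2 ^ n := by positivity
  have hy2 : (j : ℝ) / 2 ^ n < (j + 1) / 2 ^ n := by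
    rw [div_lt_div_iff₀ h2n h2n]; nlinarith
  refine runLen_congr fun k _ hk => ?_
  rw [dyadicDigit_interval hk h1 h2, dyadicDigit_interval hk (le_refl _) hy2]

lemma dense_of_dyadic {U : Set ℝ}
    (h : ∀ m j₀ : ℕ, j₀ + 1 ≤ 2 ^ m → ∃ n j : ℕ, j + 1 ≤ 2 ^ n ∧
      (j₀ : ℝ) / 2 ^ m ≤ (j : ℝ) / 2 ^ n ∧ ((j : ℝ) + 1) / 2 ^ n ≤ ((j₀ : ℝ) + 1) / 2 ^ m ∧
      Ioo ((j : ℝ) / 2 ^ n) (((j : ℝ) + 1) / 2 ^ n) ⊆ U) :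
    Dense (((↑) : Set.Icc (0:ℝ) 1 → ℝ) ⁻¹' U) := by
  rw [Metric.dense_iff]
  rintro ⟨z, hz0, hz1⟩ r hr
  obtain ⟨m, hm⟩ : ∃ m : ℕ, 1 / r < 2 ^ m := pow_unbounded_of_one_lt _ (by norm_num)
  have h2m : (0:ℝ) < 2 ^ m := by positivity
  have hrm : 1 / 2 ^ m < r := by
    rw [div_lt_iff₀ h2m]
    rw [div_lt_iff₀ hr] at hm
    linarith
  set j₀ : ℕ := min (⌊z * 2 ^ m⌋.toNat) (2 ^ m - 1) with hj₀
  have h2mnat : (1:ℕ) ≤ 2 ^ m := Nat.one_le_two_pow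
  have hj₀lt : j₀ + 1 ≤ 2 ^ m := by omega
  have hfl : (0:ℤ) ≤ ⌊z * 2 ^ m⌋ := Int.floor_nonneg.mpr (by positivity)
  have hzlb : (j₀ : ℝ) / 2 ^ m ≤ z := by
    rw [div_le_iff₀ h2m]
    have h1 : (j₀ : ℝ) ≤ (⌊z * 2 ^ m⌋.toNat : ℝ) := by
      have : j₀ ≤ ⌊z * 2 ^ m⌋.toNat := by rw [hj₀]; exact Nat.min_le_left _ _
      exact_mod_cast this
    have h2 : ((⌊z * 2 ^ m⌋.toNat : ℤ) : ℝ) ≤ z * 2 ^ m := by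
      rw [Int.toNat_of_nonneg hfl]
      exact Int.floor_le _
    push_cast at h2 ⊢
    linarith
  have hzub : z ≤ ((j₀ : ℝ) + 1) / 2 ^ m := by
    rcases le_or_gt (⌊z * 2 ^ m⌋.toNat) (2 ^ m - 1) with hc | hc
    · have : j₀ = ⌊z * 2 ^ m⌋.toNat := by omega
      rw [le_div_iff₀ h2m, this]
      have h2 : z * 2 ^ m < ⌊z * 2 ^ m⌋ + 1 := Int.lt_floor_add_one _
      have h3 : ((⌊z * 2 ^ m⌋.toNat : ℤ) : ℝ) = ⌊z * 2 ^ m⌋ := by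
        rw [Int.toNat_of_nonneg hfl]
      push_cast at h3 ⊢
      linarith
    · have : j₀ = 2 ^ m - 1 := by omega
      rw [this]
      have : ((2 ^ m - 1 : ℕ) : ℝ) + 1 = 2 ^ m := by
        push_cast [Nat.cast_sub h2mnat]
        ring
      rw [this, div_self h2m.ne']
      exact hz1
  obtain ⟨n, j, hjn, hl, hu, hsub⟩ := h m j₀ hj₀lt
  have h2n : (0:ℝ) < 2 ^ n := by positivity
  set w : ℝ := ((j : ℝ) + 2⁻¹) / 2 ^ n with hw
  have hw1 : (j : ℝ) / 2 ^ n < w := by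
    rw [div_lt_div_iff₀ h2n h2n]; nlinarith
  have hw2 : w < ((j : ℝ) + 1) / 2 ^ n := by
    rw [div_lt_div_iff₀ h2n h2n]; nlinarith
  have hwU : w ∈ U := hsub ⟨hw1, hw2⟩
  have hwI : w ∈ Set.Icc (0:ℝ) 1 := by
    constructor
    · positivity
    · have hj' : ((j:ℝ) + 1) / 2 ^ n ≤ 1 := by
        rw [div_le_one h2n]
        exact_mod_cast hjn
      linarith
  have hj₀lb : (j₀ : ℝ) / 2 ^ m ≤ w := le_trans hl hw1.le
  have hj₀ub : w ≤ ((j₀ : ℝ) + 1) / 2 ^ m := le_trans hw2.le hu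
  refine ⟨⟨w, hwI⟩, Metric.mem_ball.mpr ?_, hwU⟩
  rw [Subtype.dist_eq]
  simp only [Real.dist_eq]
  rw [abs_lt]
  constructor
  · have : ((j₀ : ℝ) + 1) / 2 ^ m - (j₀ : ℝ) / 2 ^ m = 1 / 2 ^ m := by
      field_simp
      ring
    nlinarith [hzlb, hj₀ub]
  · have : ((j₀ : ℝ) + 1) / 2 ^ m - (j₀ : ℝ) / 2 ^ m = 1 / 2 ^ m := by
      field_simp
      ring
    nlinarith [hzub, hj₀lb]

def goodS (φ : ℕ → ℝ) (p q : ℕ) : Set ℝ :=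
  ⋃ (n : ℕ) (j : ℕ) (_ : q ≤ n ∧ j + 1 ≤ 2 ^ n ∧
      (runLen ((j : ℝ) / 2 ^ n) n : ℝ) * (p + 1) < φ n),
    Ioo ((j : ℝ) / 2 ^ n) (((j : ℝ) + 1) / 2 ^ n)

def goodT (φ : ℕ → ℝ) (p q : ℕ) : Set ℝ :=
  ⋃ (n : ℕ) (j : ℕ) (_ : q ≤ n ∧ j + 1 ≤ 2 ^ n ∧
      (p : ℝ) * φ n < (runLen ((j : ℝ) / 2 ^ n) n : ℝ)),
    Ioo ((j : ℝ) / 2 ^ n) (((j : ℝ) + 1) / 2 ^ n)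

lemma goodS_open (φ : ℕ → ℝ) (p q : ℕ) : IsOpen (goodS φ p q) :=
  isOpen_iUnion fun _ => isOpen_iUnion fun _ => isOpen_iUnion fun _ => isOpen_Ioo

lemma goodT_open (φ : ℕ → ℝ) (p q : ℕ) : IsOpen (goodT φ p q) :=
  isOpen_iUnion fun _ => isOpen_iUnion fun _ => isOpen_iUnion fun _ => isOpen_Ioo

lemma goodS_spec {φ : ℕ → ℝ} {p q : ℕ} {x : ℝ} (hx : x ∈ goodS φ p q) :
    ∃ n, q ≤ n ∧ (runLen x n : ℝ) * (p + 1) < φ n := by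
  simp only [goodS, mem_iUnion] at hx
  obtain ⟨n, j, ⟨hq, _, hcond⟩, h1, h2⟩ := hx
  exact ⟨n, hq, by rwa [runLen_interval h1.le h2]⟩

lemma goodT_spec {φ : ℕ → ℝ} {p q : ℕ} {x : ℝ} (hx : x ∈ goodT φ p q) :
    ∃ n, q ≤ n ∧ (p : ℝ) * φ n < (runLen x n : ℝ) := by
  simp only [goodT, mem_iUnion] at hx
  obtain ⟨n, j, ⟨hq, _, hcond⟩, h1, h2⟩ := hx
  exact ⟨n, hq, by rwa [runLen_interval h1.le h2]⟩

lemma pow_sub_identity {m n : ℕ} (hmn : m ≤ n) : (2:ℝ) ^ n = 2 ^ m * 2 ^ (n - m) := by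
  rw [← pow_add]; congr 1; omega

lemma mul_pow_lt {j m n : ℕ} (hmn : m ≤ n) (hj : j + 1 ≤ 2 ^ m) :
    j * 2 ^ (n - m) + 2 ^ (n - m) ≤ 2 ^ n := by
  have h1 : (j + 1) * 2 ^ (n - m) ≤ 2 ^ m * 2 ^ (n - m) := Nat.mul_le_mul_right _ hj
  have h2 : 2 ^ m * 2 ^ (n - m) = 2 ^ n := by rw [← pow_add]; congr 1; omega
  have h3 : (j + 1) * 2 ^ (n - m) = j * 2 ^ (n - m) + 2 ^ (n - m) := by ring
  omega

lemma goodS_dense (φ : ℕ → ℝ) (htends : Tendsto φ atTop atTop) (p q : ℕ) :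
    Dense (((↑) : Set.Icc (0:ℝ) 1 → ℝ) ⁻¹' goodS φ p q) := by
  apply dense_of_dyadic
  intro m j₀ hj₀
  obtain ⟨n, hφ, hmax⟩ :=
    ((htends.eventually_gt_atTop ((m : ℝ) * (p + 1))).and
      (eventually_ge_atTop (max m q))).exists
  have hmn : m ≤ n := le_trans (le_max_left _ _) hmax
  have hqn : q ≤ n := le_trans (le_max_right _ _) hmax
  set t : ℕ := n - m with htdef
  set j : ℕ := j₀ * 2 ^ t with hjdef
  have h2t : (1:ℕ) ≤ 2 ^ t := Nat.one_le_two_pow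
  have hjn : j + 1 ≤ 2 ^ n := by
    have h := mul_pow_lt hmn hj₀
    rw [← htdef] at h
    omega
  have epow : (2:ℕ) ^ m * 2 ^ t = 2 ^ n := by rw [← pow_add]; congr 1; omega
  have epowR : (2:ℝ) ^ n = 2 ^ m * 2 ^ t := pow_sub_identity hmn
  have h2m : (0:ℝ) < 2 ^ m := by positivity
  have h2n : (0:ℝ) < 2 ^ n := by positivity
  refine ⟨n, j, hjn, ?_, ?_, ?_⟩
  · rw [div_le_div_iff₀ h2m h2n]
    have : (j₀ : ℝ) * 2 ^ n = (j : ℝ) * 2 ^ m := by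
      rw [hjdef, epowR]; push_cast; ring
    linarith
  · rw [div_le_div_iff₀ h2n h2m]
    have c1 : (j + 1) * 2 ^ m ≤ (j₀ + 1) * 2 ^ n := by
      calc (j + 1) * 2 ^ m = j₀ * (2 ^ m * 2 ^ t) + 2 ^ m := by rw [hjdef]; ring
        _ ≤ j₀ * (2 ^ m * 2 ^ t) + 2 ^ m * 2 ^ t := by
            have : 2 ^ m ≤ 2 ^ m * 2 ^ t := Nat.le_mul_of_pos_right _ (by positivity)
            omega
        _ = (j₀ + 1) * (2 ^ m * 2 ^ t) := by ring
        _ = (j₀ + 1) * 2 ^ n := by rw [epow]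
    exact_mod_cast c1
  · intro x hx
    have hcond : (runLen ((j : ℝ) / 2 ^ n) n : ℝ) * (p + 1) < φ n := by
      have hrl : runLen (((j₀ * 2 ^ (n - m) : ℕ) : ℝ) / 2 ^ n) n ≤ m :=
        runLen_zeros_pattern hmn (by omega)
      have hrl' : (runLen ((j : ℝ) / 2 ^ n) n : ℝ) ≤ m := by
        rw [hjdef]; exact_mod_cast hrl
      calc (runLen ((j : ℝ) / 2 ^ n) n : ℝ) * (p + 1) ≤ (m : ℝ) * (p + 1) := by
            apply mul_le_mul_of_nonneg_right hrl'
            positivity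
        _ < φ n := hφ
    exact mem_iUnion.mpr ⟨n, mem_iUnion.mpr ⟨j, mem_iUnion.mpr ⟨⟨hqn, hjn, hcond⟩, hx⟩⟩⟩

lemma goodT_dense (φ : ℕ → ℝ) (hpos : ∀ n, 0 < φ n) (hmono : Monotone φ)
    (harith : ∀ (C : ℝ) (M : ℕ), ∃ n, M ≤ n ∧ C * φ n < n) (p q : ℕ) :
    Dense (((↑) : Set.Icc (0:ℝ) 1 → ℝ) ⁻¹' goodT φ p q) := by
  apply dense_of_dyadic
  intro m j₀ hj₀
  obtain ⟨n, hmax, hC⟩ := harith ((p : ℝ) + m / φ 0) (max m q)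
  have hmn : m ≤ n := le_trans (le_max_left _ _) hmax
  have hqn : q ≤ n := le_trans (le_max_right _ _) hmax
  have hφ0 : 0 < φ 0 := hpos 0
  have hφn : 0 < φ n := hpos n
  have hφ0n : φ 0 ≤ φ n := hmono (Nat.zero_le n)
  have hkey : (p : ℝ) * φ n + m < n := by
    have h1 : (m : ℝ) ≤ (m / φ 0) * φ n := by
      rw [div_mul_eq_mul_div, le_div_iff₀ hφ0]
      have : (0:ℝ) ≤ (m:ℝ) := by positivity
      nlinarith
    have h2 : ((p : ℝ) + m / φ 0) * φ n = (p : ℝ) * φ n + (m / φ 0) * φ n := by ring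
    linarith
  set t : ℕ := n - m with htdef
  set j : ℕ := j₀ * 2 ^ t + (2 ^ t - 1) with hjdef
  have h2t : (1:ℕ) ≤ 2 ^ t := Nat.one_le_two_pow
  have hjn : j + 1 ≤ 2 ^ n := by
    have h := mul_pow_lt hmn hj₀
    rw [← htdef] at h
    omega
  have epow : (2:ℕ) ^ m * 2 ^ t = 2 ^ n := by rw [← pow_add]; congr 1; omega
  have h2m : (0:ℝ) < 2 ^ m := by positivity
  have h2n : (0:ℝ) < 2 ^ n := by positivity
  refine ⟨n, j, hjn, ?_, ?_, ?_⟩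
  · rw [div_le_div_iff₀ h2m h2n]
    have c1 : j₀ * 2 ^ n ≤ j * 2 ^ m := by
      calc j₀ * 2 ^ n = j₀ * 2 ^ t * 2 ^ m := by rw [← epow]; ring
        _ ≤ j * 2 ^ m := Nat.mul_le_mul_right _ (by omega)
    exact_mod_cast c1
  · rw [div_le_div_iff₀ h2n h2m]
    have c1 : (j + 1) * 2 ^ m ≤ (j₀ + 1) * 2 ^ n := by
      have e1 : j + 1 = (j₀ + 1) * 2 ^ t := by
        have : (j₀ + 1) * 2 ^ t = j₀ * 2 ^ t + 2 ^ t := by ring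
        omega
      have e2 : (j + 1) * 2 ^ m = (j₀ + 1) * 2 ^ n := by rw [e1, ← epow]; ring
      exact e2.le
    exact_mod_cast c1
  · intro x hx
    have hcond : (p : ℝ) * φ n < (runLen ((j : ℝ) / 2 ^ n) n : ℝ) := by
      have hrl : n - m ≤ runLen (((j₀ * 2 ^ (n - m) + (2 ^ (n - m) - 1) : ℕ) : ℝ) / 2 ^ n) n :=
        runLen_ones_pattern hmn (by omega)
      have hrl' : ((n - m : ℕ) : ℝ) ≤ (runLen ((j : ℝ) / 2 ^ n) n : ℝ) := by
        rw [hjdef]; exact_mod_cast hrl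
      have hcast : ((n - m : ℕ) : ℝ) = (n : ℝ) - m := by
        push_cast [Nat.cast_sub hmn]; ring
      rw [hcast] at hrl'
      linarith
    exact mem_iUnion.mpr ⟨n, mem_iUnion.mpr ⟨j, mem_iUnion.mpr ⟨⟨hqn, hjn, hcond⟩, hx⟩⟩⟩

/-- The exceptional set `E_max^φ` of points of `[0,1]` where `r_n(x)/φ(n)` has
liminf `0` and limsup `+∞`. -/
noncomputable def Emax (φ : ℕ → ℝ) : Set ℝ :=
  {x ∈ Set.Icc (0 : ℝ) 1 |
    atTop.liminf (fun n => ((runLen x n / φ n : ℝ) : EReal)) = 0 ∧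
    atTop.limsup (fun n => ((runLen x n / φ n : ℝ) : EReal)) = ⊤}


theorem Emax_residual_or_empty (φ : ℕ → ℝ) (hpos : ∀ n, 0 < φ n) (hmono : Monotone φ)
    (htends : Tendsto φ atTop atTop) :
    ((↑) : Set.Icc (0 : ℝ) 1 → ℝ) ⁻¹' Emax φ ∈ residual (Set.Icc (0 : ℝ) 1) ∨
      Emax φ = ∅ := by
  by_cases harith : ∀ (C : ℝ) (M : ℕ), ∃ n, M ≤ n ∧ C * φ n < n
  · left
    have hmem : (⋂ (p : ℕ), ⋂ (q : ℕ),
        (((↑) : Set.Icc (0:ℝ) 1 → ℝ) ⁻¹' goodS φ p q ∩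
          ((↑) : Set.Icc (0:ℝ) 1 → ℝ) ⁻¹' goodT φ p q)) ∈ residual (Set.Icc (0:ℝ) 1) := by
      refine (countable_iInter_mem).mpr fun p => (countable_iInter_mem).mpr fun q => ?_
      refine inter_mem ?_ ?_
      · exact residual_of_dense_open ((goodS_open φ p q).preimage continuous_subtype_val)
          (goodS_dense φ htends p q)
      · exact residual_of_dense_open ((goodT_open φ p q).preimage continuous_subtype_val)
          (goodT_dense φ hpos hmono harith p q)
    refine mem_of_superset hmem ?_
    rintro ⟨x, hxI⟩ hx
    simp only [mem_iInter, mem_inter_iff, mem_preimage] at hx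
    show x ∈ Emax φ
    refine ⟨hxI, ?_, ?_⟩
    · -- liminf = 0
      have hfreqS : ∀ p : ℕ, ∃ᶠ n in atTop,
          ((runLen x n / φ n : ℝ) : EReal) ≤ ((1 / ((p : ℝ) + 1) : ℝ) : EReal) := by
        intro p
        rw [frequently_atTop]
        intro a
        obtain ⟨n, hqn, hlt⟩ := goodS_spec (hx p a).1
        refine ⟨n, hqn, ?_⟩
        rw [EReal.coe_le_coe_iff, div_le_div_iff₀ (hpos n) (by positivity)]
        linarith
      refine le_antisymm ?_ ?_
      · by_contra hlt
        have h0 : (0 : EReal) < atTop.liminf (fun n => ((runLen x n / φ n : ℝ) : EReal)) :=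
          not_le.mp hlt
        obtain ⟨c, hc0, hcl⟩ := EReal.lt_iff_exists_real_btwn.mp h0
        have hc0' : (0:ℝ) < c := by exact_mod_cast hc0
        obtain ⟨p, hp⟩ := exists_nat_one_div_lt hc0'
        have h1 := liminf_le_of_frequently_le' (hfreqS p)
        have h2 : ((1 / ((p : ℝ) + 1) : ℝ) : EReal) < (c : EReal) := by
          exact_mod_cast hp
        exact absurd (hcl.trans_le h1) h2.not_gt
      · refine Filter.le_liminf_of_le (by isBoundedDefault) ?_
        refine Eventually.of_forall fun n => ?_
        have : (0:ℝ) ≤ runLen x n / φ n := div_nonneg (Nat.cast_nonneg _) (hpos n).le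
        exact_mod_cast this
    · -- limsup = ⊤
      have hfreqT : ∀ p : ℕ, ∃ᶠ n in atTop,
          (((p : ℝ)) : EReal) ≤ ((runLen x n / φ n : ℝ) : EReal) := by
        intro p
        rw [frequently_atTop]
        intro a
        obtain ⟨n, hqn, hlt⟩ := goodT_spec (hx p a).2
        refine ⟨n, hqn, ?_⟩
        rw [EReal.coe_le_coe_iff, le_div_iff₀ (hpos n)]
        exact hlt.le
      by_contra hne
      have hlt : atTop.limsup (fun n => ((runLen x n / φ n : ℝ) : EReal)) < ⊤ :=
        lt_top_iff_ne_top.mpr hne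
      obtain ⟨c, hcl, -⟩ := EReal.lt_iff_exists_real_btwn.mp hlt
      obtain ⟨p, hpc⟩ := exists_nat_gt c
      have h1 := le_limsup_of_frequently_le' (hfreqT p)
      have h2 : (c : EReal) < (((p : ℝ)) : EReal) := by exact_mod_cast hpc
      exact absurd ((h2.trans_le h1).trans hcl) (lt_irrefl _)
  · right
    push_neg at harith
    obtain ⟨C, M, hCM⟩ := harith
    rw [eq_empty_iff_forall_notMem]
    rintro x ⟨-, -, hsup⟩
    have hle : atTop.limsup (fun n => ((runLen x n / φ n : ℝ) : EReal)) ≤ (C : EReal) := by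
      refine Filter.limsup_le_of_le (by isBoundedDefault) ?_
      rw [eventually_atTop]
      refine ⟨M, fun n hn => ?_⟩
      have h1 : (runLen x n : ℝ) ≤ n := by exact_mod_cast runLen_le x n
      have h2 : (n : ℝ) ≤ C * φ n := hCM n hn
      have : runLen x n / φ n ≤ C := by
        rw [div_le_iff₀ (hpos n)]
        linarith
      exact_mod_cast this
    rw [hsup] at hle
    exact absurd (top_le_iff.mp hle) (EReal.coe_ne_top C)
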